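/- Suppose I* > (1−ε) Ī_α(Ψ) with ε ∈ (0,1), α₁ ≥ 2 (so α₂ ≤ 2), in the setting of the VH bound with positive γ₁, γ₂, Ψ and finite positive norms. Then ‖ (γ₂/Ψ)^{α₂}/‖γ₂/Ψ‖_{α₂}^{α₂} − γ₁γ₂/I* ‖₁ < √(2ε) + ε. -/

import Mathlib

open MeasureTheory

lemma cs_integral {Z : Type*} [MeasurableSpace Z] {ν : Measure Z} {u v : Z → ℝ}
    (hu : Integrable (fun z => u z ^ 2) ν) (hv : Integrable (fun z => v z ^ 2) ν)
    (huv : Integrable (fun z => u z * v z) ν) :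
    ∫ z, u z * v z ∂ν ≤ Real.sqrt (∫ z, u z ^ 2 ∂ν) * Real.sqrt (∫ z, v z ^ 2 ∂ν) := by
  set X := ∫ z, u z ^ 2 ∂ν with hXdef
  set Y := ∫ z, v z ^ 2 ∂ν with hYdef
  set S := ∫ z, u z * v z ∂ν with hSdef
  have hX : 0 ≤ X := integral_nonneg fun z => sq_nonneg _
  have hY : 0 ≤ Y := integral_nonneg fun z => sq_nonneg _
  have key : ∀ t : ℝ, 0 ≤ X * (t * t) + (-2 * S) * t + Y := by
    intro t
    have heq : (fun z => (t * u z - v z) ^ 2)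
        = fun z => t ^ 2 * u z ^ 2 - 2 * t * (u z * v z) + v z ^ 2 := by
      funext z; ring
    have i1 : Integrable (fun z => t ^ 2 * u z ^ 2 - 2 * t * (u z * v z)) ν :=
      (hu.const_mul _).sub (huv.const_mul _)
    have h3 : 0 ≤ ∫ z, (t * u z - v z) ^ 2 ∂ν := integral_nonneg fun z => sq_nonneg _
    have e : t ^ 2 * X - 2 * t * S + Y
        = ∫ z, (t ^ 2 * u z ^ 2 - 2 * t * (u z * v z) + v z ^ 2) ∂ν := by
      rw [hXdef, hSdef, hYdef, ← integral_const_mul, ← integral_const_mul,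
        ← integral_sub (hu.const_mul _) (huv.const_mul _), ← integral_add i1 hv]
    rw [heq] at h3
    nlinarith [h3, e]
  have hd := discrim_le_zero key
  rw [discrim] at hd
  have hS2 : S ^ 2 ≤ X * Y := by nlinarith
  calc S ≤ |S| := le_abs_self S
    _ = Real.sqrt (S ^ 2) := (Real.sqrt_sq_eq_abs S).symm
    _ ≤ Real.sqrt (X * Y) := Real.sqrt_le_sqrt hS2
    _ = Real.sqrt X * Real.sqrt Y := Real.sqrt_mul hX Y


lemma holder_stability {Z : Type*} [MeasurableSpace Z] (ν : Measure Z) (f g : Z → ℝ)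
    (hf : ∀ z, 0 < f z) (hg : ∀ z, 0 < g z) (hmf : Measurable f) (hmg : Measurable g)
    (α₁ α₂ : ℝ) (hα₁ : 2 ≤ α₁) (hα₂ : 1 < α₂) (hconj : 1 / α₁ + 1 / α₂ = 1)
    (hif : Integrable (fun z => f z ^ α₂) ν) (hig : Integrable (fun z => g z ^ α₁) ν)
    (hifg : Integrable (fun z => f z * g z) ν)
    (hf1 : ∫ z, f z ^ α₂ ∂ν = 1) (hg1 : ∫ z, g z ^ α₁ ∂ν = 1)
    (ε : ℝ) (hε0 : 0 < ε)
    (hIpos : 0 < ∫ z, f z * g z ∂ν)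
    (hgap : 1 - ε < ∫ z, f z * g z ∂ν) :
    ∫ z, |f z ^ α₂ - f z * g z / (∫ w, f w * g w ∂ν)| ∂ν < Real.sqrt (2 * ε) + ε := by
  have hα₁0 : (0:ℝ) < α₁ := by linarith
  have hα₂0 : (0:ℝ) < α₂ := by linarith
  have hα₁ne : α₁ ≠ 0 := ne_of_gt hα₁0
  have hα₂ne : α₂ ≠ 0 := ne_of_gt hα₂0
  -- α₂ ≤ 2
  have hα₂le2 : α₂ ≤ 2 := by
    have h1 : 1 / α₁ ≤ 1 / 2 := by
      apply one_div_le_one_div_of_le <;> linarith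
    have h2 : (1:ℝ) / 2 ≤ 1 / α₂ := by linarith
    exact le_of_one_div_le_one_div two_pos h2
  have hsum : α₂ + α₁ = α₁ * α₂ := by
    field_simp at hconj
    linarith
  set I := ∫ z, f z * g z ∂ν with hIdef
  -- Step 1 : I ≤ 1 via Young
  have hconj' : Real.HolderConjugate α₂ α₁ :=
    ⟨by rw [inv_eq_one_div α₂, inv_eq_one_div α₁, inv_one]; linarith, hα₂0, hα₁0⟩
  have hIle1 : I ≤ 1 := by
    have hmono : ∀ z, f z * g z ≤ f z ^ α₂ / α₂ + g z ^ α₁ / α₁ := fun z =>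
      Real.young_inequality_of_nonneg (hf z).le (hg z).le hconj'
    have : I ≤ ∫ z, (f z ^ α₂ / α₂ + g z ^ α₁ / α₁) ∂ν :=
      integral_mono hifg ((hif.div_const _).add (hig.div_const _)) hmono
    rw [integral_add (hif.div_const _) (hig.div_const _), integral_div, integral_div,
      hf1, hg1] at this
    calc I ≤ 1 / α₂ + 1 / α₁ := this
      _ = 1 := by linarith
  -- auxiliary exponent
  set θ : ℝ := (2 - α₂) / α₂ with hθdef
  have hθ0 : 0 ≤ θ := div_nonneg (by linarith) hα₂0.le
  have hθ1 : θ ≤ 1 := (div_le_one hα₂0).mpr (by linarith)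
  -- the two functions
  set A : Z → ℝ := fun z => f z ^ (α₂ / 2) with hAdef
  set B : Z → ℝ := fun z => f z ^ (1 - α₂ / 2) * g z with hBdef
  have hA2 : ∀ z, A z ^ 2 = f z ^ α₂ := by
    intro z
    rw [hAdef, sq, ← Real.rpow_add (hf z)]
    norm_num
  have hAB : ∀ z, A z * B z = f z * g z := by
    intro z
    rw [hAdef, hBdef, ← mul_assoc, ← Real.rpow_add (hf z)]
    norm_num
  have hB2 : ∀ z, B z ^ 2 = (f z ^ α₂) ^ θ * (g z ^ α₁) ^ (1 - θ) := by
    intro z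
    rw [hBdef, mul_pow, sq (f z ^ (1 - α₂ / 2)), ← Real.rpow_add (hf z),
      ← Real.rpow_mul (hf z).le, ← Real.rpow_mul (hg z).le]
    have e1 : α₂ * θ = 1 - α₂ / 2 + (1 - α₂ / 2) := by
      rw [hθdef]; field_simp; ring
    have e2 : α₁ * (1 - θ) = 2 := by
      rw [hθdef]
      have : 1 - (2 - α₂) / α₂ = (2 * α₂ - 2) / α₂ := by field_simp; ring
      rw [this]
      field_simp
      nlinarith [hsum]
    rw [e1, e2, Real.rpow_two, sq]
  have hBineq : ∀ z, B z ^ 2 ≤ θ * f z ^ α₂ + (1 - θ) * g z ^ α₁ := by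
    intro z
    rw [hB2 z]
    exact Real.geom_mean_le_arith_mean2_weighted hθ0 (by linarith)
      (Real.rpow_nonneg (hf z).le _) (Real.rpow_nonneg (hg z).le _) (by ring)
  -- measurability
  have hmrpow : ∀ c : ℝ, Measurable fun z => f z ^ c := by
    intro c
    have : (fun z => f z ^ c) = fun z => Real.exp (Real.log (f z) * c) := by
      funext z; rw [Real.rpow_def_of_pos (hf z)]
    rw [this]
    exact Real.measurable_exp.comp ((Real.measurable_log.comp hmf).mul_const c)
  have hmA : Measurable A := hmrpow _
  have hmB : Measurable B := (hmrpow _).mul hmg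
  -- integrability
  have hiA2 : Integrable (fun z => A z ^ 2) ν := by
    have : (fun z => A z ^ 2) = fun z => f z ^ α₂ := funext hA2
    rw [this]; exact hif
  have hiAB : Integrable (fun z => A z * B z) ν := by
    have : (fun z => A z * B z) = fun z => f z * g z := funext hAB
    rw [this]; exact hifg
  have hiB2 : Integrable (fun z => B z ^ 2) ν := by
    refine Integrable.mono' ((hif.const_mul θ).add (hig.const_mul (1 - θ)))
      ((hmB.pow_const 2).aestronglyMeasurable) (ae_of_all _ fun z => ?_)
    rw [Real.norm_eq_abs, abs_of_nonneg (sq_nonneg _)]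
    exact hBineq z
  -- integral computations
  have hintA2 : ∫ z, A z ^ 2 ∂ν = 1 := by
    have : (fun z => A z ^ 2) = fun z => f z ^ α₂ := funext hA2
    rw [this, hf1]
  have hintAB : ∫ z, A z * B z ∂ν = I := by
    have : (fun z => A z * B z) = fun z => f z * g z := funext hAB
    rw [this]
  have hintB2 : ∫ z, B z ^ 2 ∂ν ≤ 1 := by
    have h1 : ∫ z, B z ^ 2 ∂ν ≤ ∫ z, (θ * f z ^ α₂ + (1 - θ) * g z ^ α₁) ∂ν :=
      integral_mono hiB2 ((hif.const_mul θ).add (hig.const_mul (1 - θ))) hBineq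
    have h2 : ∫ z, (θ * f z ^ α₂ + (1 - θ) * g z ^ α₁) ∂ν = 1 := by
      rw [integral_add (hif.const_mul θ) (hig.const_mul (1 - θ)),
        integral_const_mul, integral_const_mul, hf1, hg1]
      ring
    linarith
  -- (A - B)^2 integrable and its integral
  have hiAmB2 : Integrable (fun z => (A z - B z) ^ 2) ν := by
    have : (fun z => (A z - B z) ^ 2)
        = fun z => A z ^ 2 - 2 * (A z * B z) + B z ^ 2 := by funext z; ring
    rw [this]
    exact ((hiA2.sub (hiAB.const_mul 2)).add hiB2)
  have hintAmB2 : ∫ z, (A z - B z) ^ 2 ∂ν ≤ 2 - 2 * I := by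
    have e : ∫ z, (A z - B z) ^ 2 ∂ν
        = ∫ z, (A z ^ 2 - 2 * (A z * B z) + B z ^ 2) ∂ν := by
      congr 1; funext z; ring
    have i3 : Integrable (fun z => A z ^ 2 - 2 * (A z * B z)) ν :=
      hiA2.sub (hiAB.const_mul 2)
    have e2 : (∫ z, A z ^ 2 ∂ν) - 2 * (∫ z, A z * B z ∂ν) + ∫ z, B z ^ 2 ∂ν
        = ∫ z, (A z ^ 2 - 2 * (A z * B z) + B z ^ 2) ∂ν := by
      rw [← integral_const_mul, ← integral_sub hiA2 (hiAB.const_mul 2),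
        ← integral_add i3 hiB2]
    rw [e, ← e2, hintA2, hintAB]
    linarith
  -- key Cauchy–Schwarz bound
  have habs : ∀ z, |f z ^ α₂ - f z * g z| = A z * |A z - B z| := by
    intro z
    have hA0 : 0 ≤ A z := Real.rpow_nonneg (hf z).le _
    rw [← hA2 z, ← hAB z, show A z ^ 2 - A z * B z = A z * (A z - B z) by ring,
      abs_mul, abs_of_nonneg hA0]
  have hiabs : Integrable (fun z => |f z ^ α₂ - f z * g z|) ν := (hif.sub hifg).abs
  have hiAabs : Integrable (fun z => A z * |A z - B z|) ν := by
    have : (fun z => A z * |A z - B z|) = fun z => |f z ^ α₂ - f z * g z| := by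
      funext z; rw [habs z]
    rw [this]; exact hiabs
  have hiabs2 : Integrable (fun z => |A z - B z| ^ 2) ν := by
    have : (fun z => |A z - B z| ^ 2) = fun z => (A z - B z) ^ 2 := by
      funext z; rw [sq_abs]
    rw [this]; exact hiAmB2
  have hCS : ∫ z, A z * |A z - B z| ∂ν
      ≤ Real.sqrt (∫ z, A z ^ 2 ∂ν) * Real.sqrt (∫ z, |A z - B z| ^ 2 ∂ν) :=
    cs_integral hiA2 hiabs2 hiAabs
  have hsq2 : ∫ z, |A z - B z| ^ 2 ∂ν = ∫ z, (A z - B z) ^ 2 ∂ν := by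
    congr 1; funext z; rw [sq_abs]
  have hT1 : ∫ z, |f z ^ α₂ - f z * g z| ∂ν < Real.sqrt (2 * ε) := by
    have e : ∫ z, |f z ^ α₂ - f z * g z| ∂ν = ∫ z, A z * |A z - B z| ∂ν := by
      congr 1; funext z; rw [habs z]
    rw [e]
    calc ∫ z, A z * |A z - B z| ∂ν
        ≤ Real.sqrt (∫ z, A z ^ 2 ∂ν) * Real.sqrt (∫ z, |A z - B z| ^ 2 ∂ν) := hCS
      _ = Real.sqrt (∫ z, (A z - B z) ^ 2 ∂ν) := by
          rw [hintA2, Real.sqrt_one, one_mul, hsq2]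
      _ ≤ Real.sqrt (2 - 2 * I) := Real.sqrt_le_sqrt hintAmB2
      _ < Real.sqrt (2 * ε) := by
          apply Real.sqrt_lt_sqrt (by linarith)
          linarith
  -- the normalization error term
  have hIne : I ≠ 0 := ne_of_gt hIpos
  have hT2 : ∫ z, |f z * g z - f z * g z / I| ∂ν = 1 - I := by
    have h1I : 1 ≤ 1 / I := by
      rw [le_div_iff₀ hIpos]; linarith
    have e : (fun z => |f z * g z - f z * g z / I|)
        = fun z => (1 / I - 1) * (f z * g z) := by
      funext z
      have : f z * g z - f z * g z / I = (1 - 1 / I) * (f z * g z) := by ring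
      rw [this, abs_mul, abs_of_nonneg (mul_pos (hf z) (hg z)).le,
        abs_of_nonpos (by linarith : 1 - 1 / I ≤ 0)]
      ring
    rw [e, integral_const_mul, ← hIdef]
    field_simp
  -- final assembly
  have htri : ∀ z, |f z ^ α₂ - f z * g z / I|
      ≤ |f z ^ α₂ - f z * g z| + |f z * g z - f z * g z / I| := fun z =>
    abs_sub_le _ _ _
  have hiL : Integrable (fun z => |f z ^ α₂ - f z * g z / I|) ν :=
    (hif.sub (hifg.div_const I)).abs
  have hiR2 : Integrable (fun z => |f z * g z - f z * g z / I|) ν :=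
    (hifg.sub (hifg.div_const I)).abs
  have hmain : ∫ z, |f z ^ α₂ - f z * g z / I| ∂ν
      ≤ (∫ z, |f z ^ α₂ - f z * g z| ∂ν) + ∫ z, |f z * g z - f z * g z / I| ∂ν := by
    have h1 : ∫ z, |f z ^ α₂ - f z * g z / I| ∂ν
        ≤ ∫ z, (|f z ^ α₂ - f z * g z| + |f z * g z - f z * g z / I|) ∂ν :=
      integral_mono hiL (hiabs.add hiR2) htri
    rwa [integral_add hiabs hiR2] at h1
  calc ∫ z, |f z ^ α₂ - f z * g z / I| ∂ν
      ≤ (∫ z, |f z ^ α₂ - f z * g z| ∂ν) + ∫ z, |f z * g z - f z * g z / I| ∂ν := hmain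
    _ < Real.sqrt (2 * ε) + ε := by rw [hT2]; linarith

theorem vh_approximation_guarantee_second
    {Z : Type*} [MeasurableSpace Z] (ν : Measure Z)
    (γ₁ γ₂ Ψ : Z → ℝ)
    (hγ₁ : ∀ z, 0 < γ₁ z) (hγ₂ : ∀ z, 0 < γ₂ z) (hΨ : ∀ z, 0 < Ψ z)
    (hmγ₁ : Measurable γ₁) (hmγ₂ : Measurable γ₂) (hmΨ : Measurable Ψ)
    (α₁ α₂ : ℝ) (hα₁ : 2 ≤ α₁) (hα₂ : 1 < α₂) (hconj : 1 / α₁ + 1 / α₂ = 1)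
    (hint : Integrable (fun z => γ₁ z * γ₂ z) ν)
    (hint₁ : Integrable (fun z => (γ₁ z * Ψ z) ^ α₁) ν)
    (hint₂ : Integrable (fun z => (γ₂ z / Ψ z) ^ α₂) ν)
    (hIpos : 0 < ∫ z, γ₁ z * γ₂ z ∂ν)
    (hN₁pos : 0 < (∫ z, (γ₁ z * Ψ z) ^ α₁ ∂ν) ^ (1 / α₁))
    (hN₂pos : 0 < (∫ z, (γ₂ z / Ψ z) ^ α₂ ∂ν) ^ (1 / α₂))
    (ε : ℝ) (hε0 : 0 < ε) (hε1 : ε < 1)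
    (hgap : ∫ z, γ₁ z * γ₂ z ∂ν >
      (1 - ε) * ((∫ z, (γ₁ z * Ψ z) ^ α₁ ∂ν) ^ (1 / α₁) *
        (∫ z, (γ₂ z / Ψ z) ^ α₂ ∂ν) ^ (1 / α₂))) :
    ∫ z, |(γ₂ z / Ψ z) ^ α₂ / (∫ w, (γ₂ w / Ψ w) ^ α₂ ∂ν) -
        γ₁ z * γ₂ z / (∫ w, γ₁ w * γ₂ w ∂ν)| ∂ν
      < Real.sqrt (2 * ε) + ε := by
  have hα₁0 : (0:ℝ) < α₁ := by linarith
  have hα₂0 : (0:ℝ) < α₂ := by linarith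
  set X := ∫ z, (γ₂ z / Ψ z) ^ α₂ ∂ν with hXdef
  set Y := ∫ z, (γ₁ z * Ψ z) ^ α₁ ∂ν with hYdef
  set I := ∫ z, γ₁ z * γ₂ z ∂ν with hIdef
  set N₁ := Y ^ (1 / α₁) with hN1def
  set N₂ := X ^ (1 / α₂) with hN2def
  have hX0 : 0 ≤ X := integral_nonneg fun z =>
    Real.rpow_nonneg (div_nonneg (hγ₂ z).le (hΨ z).le) _
  have hY0 : 0 ≤ Y := integral_nonneg fun z =>
    Real.rpow_nonneg (mul_nonneg (hγ₁ z).le (hΨ z).le) _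
  have hXpos : 0 < X := by
    rcases lt_or_eq_of_le hX0 with h | h
    · exact h
    · exfalso
      rw [hN2def, ← h, Real.zero_rpow (by positivity)] at hN₂pos
      exact lt_irrefl 0 hN₂pos
  have hYpos : 0 < Y := by
    rcases lt_or_eq_of_le hY0 with h | h
    · exact h
    · exfalso
      rw [hN1def, ← h, Real.zero_rpow (by positivity)] at hN₁pos
      exact lt_irrefl 0 hN₁pos
  have hN2αeq : N₂ ^ α₂ = X := by
    rw [hN2def, ← Real.rpow_mul hX0, one_div_mul_cancel hα₂0.ne', Real.rpow_one]
  have hN1αeq : N₁ ^ α₁ = Y := by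
    rw [hN1def, ← Real.rpow_mul hY0, one_div_mul_cancel hα₁0.ne', Real.rpow_one]
  -- normalized functions
  set f : Z → ℝ := fun z => γ₂ z / Ψ z / N₂ with hfdef
  set g : Z → ℝ := fun z => γ₁ z * Ψ z / N₁ with hgdef
  have hfpos : ∀ z, 0 < f z := fun z => div_pos (div_pos (hγ₂ z) (hΨ z)) hN₂pos
  have hgpos : ∀ z, 0 < g z := fun z => div_pos (mul_pos (hγ₁ z) (hΨ z)) hN₁pos
  have hmf : Measurable f := (hmγ₂.div hmΨ).div_const N₂
  have hmg : Measurable g := (hmγ₁.mul hmΨ).div_const N₁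
  have hfα : ∀ z, f z ^ α₂ = (γ₂ z / Ψ z) ^ α₂ / X := by
    intro z
    rw [hfdef, Real.div_rpow (div_nonneg (hγ₂ z).le (hΨ z).le) hN₂pos.le, hN2αeq]
  have hgα : ∀ z, g z ^ α₁ = (γ₁ z * Ψ z) ^ α₁ / Y := by
    intro z
    rw [hgdef, Real.div_rpow (mul_nonneg (hγ₁ z).le (hΨ z).le) hN₁pos.le, hN1αeq]
  have hfg : ∀ z, f z * g z = γ₁ z * γ₂ z / (N₁ * N₂) := by
    intro z
    rw [hfdef, hgdef]
    field_simp [(hΨ z).ne']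
  have hif : Integrable (fun z => f z ^ α₂) ν := by
    have : (fun z => f z ^ α₂) = fun z => (γ₂ z / Ψ z) ^ α₂ / X := funext hfα
    rw [this]; exact hint₂.div_const X
  have hig : Integrable (fun z => g z ^ α₁) ν := by
    have : (fun z => g z ^ α₁) = fun z => (γ₁ z * Ψ z) ^ α₁ / Y := funext hgα
    rw [this]; exact hint₁.div_const Y
  have hifg : Integrable (fun z => f z * g z) ν := by
    have : (fun z => f z * g z) = fun z => γ₁ z * γ₂ z / (N₁ * N₂) := funext hfg
    rw [this]; exact hint.div_const _
  have hf1 : ∫ z, f z ^ α₂ ∂ν = 1 := by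
    have e : (fun z => f z ^ α₂) = fun z => (γ₂ z / Ψ z) ^ α₂ / X := funext hfα
    rw [e, integral_div, ← hXdef, div_self hXpos.ne']
  have hg1 : ∫ z, g z ^ α₁ ∂ν = 1 := by
    have e : (fun z => g z ^ α₁) = fun z => (γ₁ z * Ψ z) ^ α₁ / Y := funext hgα
    rw [e, integral_div, ← hYdef, div_self hYpos.ne']
  have hIfg : ∫ z, f z * g z ∂ν = I / (N₁ * N₂) := by
    have e : (fun z => f z * g z) = fun z => γ₁ z * γ₂ z / (N₁ * N₂) := funext hfg
    rw [e, integral_div, ← hIdef]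
  have hNNpos : 0 < N₁ * N₂ := mul_pos hN₁pos hN₂pos
  have hI'pos : 0 < ∫ z, f z * g z ∂ν := by
    rw [hIfg]; exact div_pos hIpos hNNpos
  have hgap' : 1 - ε < ∫ z, f z * g z ∂ν := by
    rw [hIfg, lt_div_iff₀ hNNpos]
    linarith [hgap]
  have key := holder_stability ν f g hfpos hgpos hmf hmg α₁ α₂ hα₁ hα₂ hconj
    hif hig hifg hf1 hg1 ε hε0 hI'pos hgap'
  have efinal : (fun z => |f z ^ α₂ - f z * g z / (∫ w, f w * g w ∂ν)|)
      = fun z => |(γ₂ z / Ψ z) ^ α₂ / X - γ₁ z * γ₂ z / I| := by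
    funext z
    rw [hIfg, hfα z, hfg z]
    congr 2
    field_simp
  rw [efinal] at key
  exact key
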